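/- For every α ∈ (0,1) and every T > 0 there is a constant K = K(α, T) such that for all 0 < t ≤ T and all y₁, y₂ ∈ ℝ, ∫_0^t ∫_ℝ (p_s(y₁ − z) − p_s(y₂ − z))² e^{|z|} dz ds ≤ K · e^{max(|y₁|, |y₂|)} · |y₁ − y₂|^α. -/

import Mathlib

open MeasureTheory Real Filter Topology

/-- The heat kernel `p_s(x) = (2πs)^{-1/2} exp(-x²/(2s))`. -/
noncomputable def heatKernel (s x : ℝ) : ℝ :=
  (Real.sqrt (2 * Real.pi * s))⁻¹ * Real.exp (-(x ^ 2) / (2 * s))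

lemma heatKernel_nonneg (s x : ℝ) : 0 ≤ heatKernel s x := by
  unfold heatKernel; positivity

lemma sqrt_le_sqrt_two_pi (s : ℝ) (hs : 0 < s) : Real.sqrt s ≤ Real.sqrt (2 * Real.pi * s) := by
  apply Real.sqrt_le_sqrt
  nlinarith [Real.pi_gt_three]

lemma heatKernel_le {s : ℝ} (hs : 0 < s) (x : ℝ) : heatKernel s x ≤ (Real.sqrt s)⁻¹ := by
  unfold heatKernel
  have h1 : Real.exp (-(x ^ 2) / (2 * s)) ≤ 1 := by
    rw [Real.exp_le_one_iff]
    have : 0 ≤ x ^ 2 / (2 * s) := by positivity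
    linarith [neg_div (2*s) (x^2)]
  have h2 : (Real.sqrt (2 * Real.pi * s))⁻¹ ≤ (Real.sqrt s)⁻¹ := by
    apply inv_anti₀ (Real.sqrt_pos.2 hs) (sqrt_le_sqrt_two_pi s hs)
  calc (Real.sqrt (2 * Real.pi * s))⁻¹ * Real.exp (-(x ^ 2) / (2 * s))
      ≤ (Real.sqrt (2 * Real.pi * s))⁻¹ * 1 := by
        apply mul_le_mul_of_nonneg_left h1; positivity
    _ ≤ (Real.sqrt s)⁻¹ := by rw [mul_one]; exact h2

lemma abs_mul_exp_le {s : ℝ} (hs : 0 < s) (x : ℝ) :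
    |x| * Real.exp (-(x ^ 2) / (2 * s)) ≤ 2 * Real.sqrt s := by
  have hss : (0:ℝ) < Real.sqrt s := Real.sqrt_pos.2 hs
  rcases le_or_gt |x| (2 * Real.sqrt s) with h | h
  · have : Real.exp (-(x ^ 2) / (2 * s)) ≤ 1 := by
      rw [Real.exp_le_one_iff]
      have : 0 ≤ x ^ 2 / (2 * s) := by positivity
      linarith [neg_div (2*s) (x^2)]
    nlinarith [abs_nonneg x, Real.exp_pos (-(x ^ 2) / (2 * s))]
  · have hx : 0 < |x| := lt_trans (by positivity) h
    have hx2 : 0 < x ^ 2 / (2 * s) := by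
      have : x ≠ 0 := abs_pos.1 hx
      positivity
    have hexp : Real.exp (-(x ^ 2) / (2 * s)) ≤ (x ^ 2 / (2 * s))⁻¹ := by
      rw [neg_div, Real.exp_neg]
      apply inv_anti₀ hx2
      linarith [Real.add_one_le_exp (x ^ 2 / (2 * s))]
    have hxx : x ^ 2 = |x| ^ 2 := (sq_abs x).symm
    have key : |x| * (x ^ 2 / (2 * s))⁻¹ ≤ Real.sqrt s := by
      have hm : |x| ≠ 0 := hx.ne'
      have heq : |x| * (x ^ 2 / (2 * s))⁻¹ = 2 * s / |x| := by
        rw [hxx, inv_div, sq, ← div_div, mul_comm, div_mul_cancel₀ _ hx.ne']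
      rw [heq, div_le_iff₀ hx]
      have h2 : Real.sqrt s * Real.sqrt s = s := Real.mul_self_sqrt hs.le
      nlinarith [mul_le_mul_of_nonneg_left h.le hss.le]
    calc |x| * Real.exp (-(x ^ 2) / (2 * s)) ≤ |x| * (x ^ 2 / (2 * s))⁻¹ :=
          mul_le_mul_of_nonneg_left hexp (abs_nonneg x)
      _ ≤ Real.sqrt s := key
      _ ≤ 2 * Real.sqrt s := by linarith

lemma heatKernel_hasDerivAt (s : ℝ) (x : ℝ) :
    HasDerivAt (fun x => heatKernel s x)
      ((Real.sqrt (2 * Real.pi * s))⁻¹ *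
        (Real.exp (-(x ^ 2) / (2 * s)) * (-(2 * x ^ 1) / (2 * s)))) x := by
  unfold heatKernel
  have h1 : HasDerivAt (fun x : ℝ => -(x ^ 2) / (2 * s)) (-((2:ℕ) * x ^ 1) / (2 * s)) x :=
    ((hasDerivAt_pow 2 x).neg).div_const (2 * s)
  have h2 := (h1.exp).const_mul (Real.sqrt (2 * Real.pi * s))⁻¹
  simpa using h2

lemma heatKernel_lipschitz {s : ℝ} (hs : 0 < s) (a b : ℝ) :
    |heatKernel s a - heatKernel s b| ≤ 2 / s * |a - b| := by
  have hss : (0:ℝ) < Real.sqrt s := Real.sqrt_pos.2 hs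
  have bound : ∀ x : ℝ,
      ‖(Real.sqrt (2 * Real.pi * s))⁻¹ *
        (Real.exp (-(x ^ 2) / (2 * s)) * (-(2 * x ^ 1) / (2 * s)))‖ ≤ 2 / s := by
    intro x
    rw [Real.norm_eq_abs, abs_mul, abs_mul]
    have e1 : |(Real.sqrt (2 * Real.pi * s))⁻¹| ≤ (Real.sqrt s)⁻¹ := by
      rw [abs_of_nonneg (by positivity)]
      exact inv_anti₀ hss (sqrt_le_sqrt_two_pi s hs)
    have e2 : |Real.exp (-(x ^ 2) / (2 * s))| * |(-(2 * x ^ 1) / (2 * s))| ≤ 2 * Real.sqrt s / s := by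
      rw [abs_of_nonneg (Real.exp_pos _).le, abs_div, abs_neg, abs_of_nonneg (by positivity : (0:ℝ) ≤ 2 * s)]
      rw [show |2 * x ^ 1| = 2 * |x| by rw [abs_mul, pow_one]; norm_num]
      rw [mul_div_assoc', div_le_div_iff₀ (by positivity) hs]
      have := abs_mul_exp_le hs x
      nlinarith [Real.exp_pos (-(x ^ 2) / (2 * s)), abs_nonneg x, hss.le]
    calc |(Real.sqrt (2 * Real.pi * s))⁻¹| * (|Real.exp (-(x ^ 2) / (2 * s))| * |(-(2 * x ^ 1) / (2 * s))|)
        ≤ (Real.sqrt s)⁻¹ * (2 * Real.sqrt s / s) := by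
          apply mul_le_mul e1 e2 (by positivity) (by positivity)
      _ = 2 / s := by
          rw [eq_div_iff hs.ne']
          field_simp
  have := convex_univ.norm_image_sub_le_of_norm_hasDerivWithin_le
    (f := fun x => heatKernel s x)
    (f' := fun x => (Real.sqrt (2 * Real.pi * s))⁻¹ *
        (Real.exp (-(x ^ 2) / (2 * s)) * (-(2 * x ^ 1) / (2 * s))))
    (fun x _ => (heatKernel_hasDerivAt s x).hasDerivWithinAt)
    (fun x _ => bound x) (Set.mem_univ b) (Set.mem_univ a)
  simpa [Real.norm_eq_abs] using this

lemma key_pointwise {α s : ℝ} (hα0 : 0 < α) (hα1 : α < 1) (hs : 0 < s) (a b : ℝ) :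
    (heatKernel s a - heatKernel s b) ^ 2 ≤
      2 * |a - b| ^ α * ((Real.sqrt s)⁻¹) ^ ((1:ℝ) + α) *
        (heatKernel s a + heatKernel s b) := by
  have hss : (0:ℝ) < Real.sqrt s := Real.sqrt_pos.2 hs
  set u := heatKernel s a with hu
  set v := heatKernel s b with hv
  have hu0 : 0 ≤ u := heatKernel_nonneg s a
  have hv0 : 0 ≤ v := heatKernel_nonneg s b
  set d := |u - v| with hdd
  have hd0 : 0 ≤ d := abs_nonneg _
  have hsq : (u - v) ^ 2 = d ^ 2 := (sq_abs _).symm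
  rcases eq_or_lt_of_le hd0 with hd | hd
  · rw [hsq, ← hd]
    have : (0:ℝ) ≤ 2 * |a - b| ^ α * ((Real.sqrt s)⁻¹) ^ ((1:ℝ) + α) * (u + v) := by
      apply mul_nonneg (mul_nonneg (mul_nonneg (by norm_num)
        (Real.rpow_nonneg (abs_nonneg _) _)) (Real.rpow_nonneg (by positivity) _))
      linarith
    simpa using this
  · have h1 : d ≤ 2 / s * |a - b| := heatKernel_lipschitz hs a b
    have h2 : d ≤ u + v := by
      rw [hdd, abs_sub_le_iff]; constructor <;> linarith
    have h3 : d ≤ (Real.sqrt s)⁻¹ := by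
      have ha := heatKernel_le hs a
      have hb := heatKernel_le hs b
      rw [hdd, abs_sub_le_iff, hu, hv]; constructor <;> linarith [heatKernel_nonneg s a, heatKernel_nonneg s b]
    have e : d ^ 2 = d ^ α * d ^ (1 - α) * d ^ (1:ℝ) := by
      rw [← Real.rpow_add hd, ← Real.rpow_add hd,
        show α + (1 - α) + 1 = ((2:ℕ):ℝ) by push_cast; ring, Real.rpow_natCast]
    have b1 : d ^ α ≤ (2 / s * |a - b|) ^ α := Real.rpow_le_rpow hd0 h1 hα0.le
    have b2 : d ^ (1 - α) ≤ ((Real.sqrt s)⁻¹) ^ (1 - α) :=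
      Real.rpow_le_rpow hd0 h3 (by linarith)
    have b3 : d ^ (1:ℝ) ≤ u + v := by rw [Real.rpow_one]; exact h2
    have step1 : d ^ 2 ≤ (2 / s * |a - b|) ^ α * ((Real.sqrt s)⁻¹) ^ (1 - α) * (u + v) := by
      rw [e]
      apply mul_le_mul (mul_le_mul b1 b2 (Real.rpow_nonneg hd0 _)
        (Real.rpow_nonneg (by positivity) _)) b3 (Real.rpow_nonneg hd0 _)
      apply mul_nonneg (Real.rpow_nonneg (by positivity) _) (Real.rpow_nonneg (by positivity) _)
    have alg : (2 / s * |a - b|) ^ α * ((Real.sqrt s)⁻¹) ^ (1 - α) ≤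
        2 * |a - b| ^ α * ((Real.sqrt s)⁻¹) ^ ((1:ℝ) + α) := by
      have hinv : s⁻¹ = ((Real.sqrt s)⁻¹) ^ ((2:ℕ):ℝ) := by
        rw [Real.rpow_natCast, inv_pow, Real.sq_sqrt hs.le]
      have e1 : (2 / s * |a - b|) ^ α = 2 ^ α * (((Real.sqrt s)⁻¹) ^ (2 * α)) * |a - b| ^ α := by
        rw [div_eq_mul_inv, Real.mul_rpow (by positivity) (abs_nonneg _),
          Real.mul_rpow (by norm_num) (by positivity), hinv,
          ← Real.rpow_mul (by positivity : (0:ℝ) ≤ (Real.sqrt s)⁻¹)]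
        norm_num
      rw [e1]
      have e2 : ((Real.sqrt s)⁻¹) ^ (2 * α) * ((Real.sqrt s)⁻¹) ^ (1 - α) =
          ((Real.sqrt s)⁻¹) ^ ((1:ℝ) + α) := by
        rw [← Real.rpow_add (by positivity)]
        ring_nf
      have h2le : (2:ℝ) ^ α ≤ 2 := by
        calc (2:ℝ) ^ α ≤ (2:ℝ) ^ (1:ℝ) :=
          Real.rpow_le_rpow_of_exponent_le (by norm_num) (by linarith)
        _ = 2 := Real.rpow_one 2
      calc 2 ^ α * ((Real.sqrt s)⁻¹) ^ (2 * α) * |a - b| ^ α * ((Real.sqrt s)⁻¹) ^ (1 - α)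
          = 2 ^ α * |a - b| ^ α * (((Real.sqrt s)⁻¹) ^ (2 * α) * ((Real.sqrt s)⁻¹) ^ (1 - α)) := by
            ring
        _ = 2 ^ α * |a - b| ^ α * ((Real.sqrt s)⁻¹) ^ ((1:ℝ) + α) := by rw [e2]
        _ ≤ 2 * |a - b| ^ α * ((Real.sqrt s)⁻¹) ^ ((1:ℝ) + α) := by
            apply mul_le_mul_of_nonneg_right _ (Real.rpow_nonneg (by positivity) _)
            apply mul_le_mul_of_nonneg_right h2le (Real.rpow_nonneg (abs_nonneg _) _)
    calc (u - v) ^ 2 = d ^ 2 := hsq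
      _ ≤ (2 / s * |a - b|) ^ α * ((Real.sqrt s)⁻¹) ^ (1 - α) * (u + v) := step1
      _ ≤ 2 * |a - b| ^ α * ((Real.sqrt s)⁻¹) ^ ((1:ℝ) + α) * (u + v) :=
          mul_le_mul_of_nonneg_right alg (by linarith)

lemma hk_mul_exp_le {s T : ℝ} (hs : 0 < s) (hsT : s ≤ T) (y z : ℝ) :
    heatKernel s (y - z) * Real.exp |z| ≤
      (Real.sqrt (2 * Real.pi * s))⁻¹ *
        (Real.exp (T + |y|) * Real.exp (-(y - z) ^ 2 / (4 * s))) := by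
  unfold heatKernel
  rw [mul_assoc, ← Real.exp_add, ← Real.exp_add]
  apply mul_le_mul_of_nonneg_left _ (by positivity)
  apply Real.exp_le_exp.2
  have h1 : |z| ≤ |y| + |y - z| := by
    calc |z| = |y + (z - y)| := by congr 1; ring
      _ ≤ |y| + |z - y| := abs_add_le _ _
      _ = |y| + |y - z| := by rw [abs_sub_comm]
  have h2 : |y - z| ≤ (y - z) ^ 2 / (4 * s) + s := by
    have key : |y - z| * (4 * s) ≤ ((y - z) ^ 2 / (4 * s) + s) * (4 * s) := by
      have hc : (y - z) ^ 2 / (4 * s) * (4 * s) = (y - z) ^ 2 :=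
        div_mul_cancel₀ _ (by positivity)
      nlinarith [sq_nonneg (|y - z| - 2 * s), sq_abs (y - z)]
    exact le_of_mul_le_mul_right key (by positivity)
  have e1 : -((y - z) ^ 2) / (2 * s) = -((y - z) ^ 2 / (2 * s)) := neg_div _ _
  have e2 : -((y - z) ^ 2) / (4 * s) = -((y - z) ^ 2 / (4 * s)) := neg_div _ _
  have hr : (y - z) ^ 2 / (2 * s) = 2 * ((y - z) ^ 2 / (4 * s)) := by
    field_simp
    ring
  have h3 : 0 ≤ (y - z) ^ 2 / (4 * s) := by positivity
  rw [e1, e2]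
  linarith

lemma integrable_gauss_shift {s : ℝ} (hs : 0 < s) (y : ℝ) :
    Integrable (fun z : ℝ => Real.exp (-(y - z) ^ 2 / (4 * s))) := by
  have h : Integrable (fun x : ℝ => Real.exp (-(1 / (4 * s)) * x ^ 2)) :=
    integrable_exp_neg_mul_sq (by positivity)
  have h2 := h.comp_sub_left y
  have he : (fun z : ℝ => Real.exp (-(y - z) ^ 2 / (4 * s))) =
      fun z : ℝ => Real.exp (-(1 / (4 * s)) * (y - z) ^ 2) := by
    funext z; congr 1; field_simp
  rw [he]; exact h2

lemma integral_gauss_shift {s : ℝ} (hs : 0 < s) (y : ℝ) :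
    ∫ z : ℝ, Real.exp (-(y - z) ^ 2 / (4 * s)) = Real.sqrt 2 * Real.sqrt (2 * Real.pi * s) := by
  have he : (fun z : ℝ => Real.exp (-(y - z) ^ 2 / (4 * s))) =
      fun z : ℝ => Real.exp (-(1 / (4 * s)) * (y - z) ^ 2) := by
    funext z; congr 1; field_simp
  rw [he]
  rw [integral_sub_left_eq_self (fun x : ℝ => Real.exp (-(1 / (4 * s)) * x ^ 2)) volume y]
  rw [integral_gaussian]
  rw [show Real.pi / (1 / (4 * s)) = 2 * (2 * Real.pi * s) by field_simp; ring]
  rw [Real.sqrt_mul (by norm_num : (0:ℝ) ≤ 2)]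

lemma inner_bound {α s T : ℝ} (hα0 : 0 < α) (hα1 : α < 1) (hs : 0 < s) (hsT : s ≤ T)
    (y₁ y₂ : ℝ) :
    (∫ z : ℝ, (heatKernel s (y₁ - z) - heatKernel s (y₂ - z)) ^ 2 * Real.exp |z|) ≤
      4 * Real.sqrt 2 * Real.exp (T + max |y₁| |y₂|) * |y₁ - y₂| ^ α *
        ((Real.sqrt s)⁻¹) ^ ((1:ℝ) + α) := by
  have hss : (0:ℝ) < Real.sqrt s := Real.sqrt_pos.2 hs
  have hsp : (0:ℝ) < Real.sqrt (2 * Real.pi * s) := Real.sqrt_pos.2 (by positivity)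
  set A : ℝ := 2 * |y₁ - y₂| ^ α * ((Real.sqrt s)⁻¹) ^ ((1:ℝ) + α) with hA
  have hA0 : 0 ≤ A := by
    apply mul_nonneg (mul_nonneg (by norm_num) (Real.rpow_nonneg (abs_nonneg _) _))
    exact Real.rpow_nonneg (by positivity) _
  set c : ℝ := (Real.sqrt (2 * Real.pi * s))⁻¹ * Real.exp (T + max |y₁| |y₂|) with hc
  have hc0 : 0 ≤ c := by positivity
  set g : ℝ → ℝ := fun z =>
    A * (c * (Real.exp (-(y₁ - z) ^ 2 / (4 * s)) + Real.exp (-(y₂ - z) ^ 2 / (4 * s)))) with hg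
  have hgint : Integrable g :=
    (((integrable_gauss_shift hs y₁).add (integrable_gauss_shift hs y₂)).const_mul c).const_mul A
  have hmono : ∀ z : ℝ,
      (heatKernel s (y₁ - z) - heatKernel s (y₂ - z)) ^ 2 * Real.exp |z| ≤ g z := by
    intro z
    have k1 := key_pointwise hα0 hα1 hs (y₁ - z) (y₂ - z)
    have habs : |y₁ - z - (y₂ - z)| = |y₁ - y₂| := by congr 1; ring
    rw [habs] at k1
    have step1 : (heatKernel s (y₁ - z) - heatKernel s (y₂ - z)) ^ 2 * Real.exp |z| ≤
        A * ((heatKernel s (y₁ - z) + heatKernel s (y₂ - z)) * Real.exp |z|) := by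
      have := mul_le_mul_of_nonneg_right k1 (Real.exp_pos |z|).le
      calc (heatKernel s (y₁ - z) - heatKernel s (y₂ - z)) ^ 2 * Real.exp |z|
          ≤ A * (heatKernel s (y₁ - z) + heatKernel s (y₂ - z)) * Real.exp |z| := this
        _ = A * ((heatKernel s (y₁ - z) + heatKernel s (y₂ - z)) * Real.exp |z|) := by ring
    refine le_trans step1 ?_
    rw [hg]
    apply mul_le_mul_of_nonneg_left _ hA0
    have b1 : heatKernel s (y₁ - z) * Real.exp |z| ≤
        c * Real.exp (-(y₁ - z) ^ 2 / (4 * s)) := by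
      refine le_trans (hk_mul_exp_le hs hsT y₁ z) ?_
      have hexp : Real.exp (T + |y₁|) ≤ Real.exp (T + max |y₁| |y₂|) :=
        Real.exp_le_exp.2 (by simp [le_max_left])
      calc (Real.sqrt (2 * Real.pi * s))⁻¹ *
            (Real.exp (T + |y₁|) * Real.exp (-(y₁ - z) ^ 2 / (4 * s)))
          ≤ (Real.sqrt (2 * Real.pi * s))⁻¹ *
            (Real.exp (T + max |y₁| |y₂|) * Real.exp (-(y₁ - z) ^ 2 / (4 * s))) := by
            apply mul_le_mul_of_nonneg_left
              (mul_le_mul_of_nonneg_right hexp (Real.exp_pos _).le) (by positivity)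
        _ = c * Real.exp (-(y₁ - z) ^ 2 / (4 * s)) := by rw [hc]; ring
    have b2 : heatKernel s (y₂ - z) * Real.exp |z| ≤
        c * Real.exp (-(y₂ - z) ^ 2 / (4 * s)) := by
      refine le_trans (hk_mul_exp_le hs hsT y₂ z) ?_
      have hexp : Real.exp (T + |y₂|) ≤ Real.exp (T + max |y₁| |y₂|) :=
        Real.exp_le_exp.2 (by simp [le_max_right])
      calc (Real.sqrt (2 * Real.pi * s))⁻¹ *
            (Real.exp (T + |y₂|) * Real.exp (-(y₂ - z) ^ 2 / (4 * s)))
          ≤ (Real.sqrt (2 * Real.pi * s))⁻¹ *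
            (Real.exp (T + max |y₁| |y₂|) * Real.exp (-(y₂ - z) ^ 2 / (4 * s))) := by
            apply mul_le_mul_of_nonneg_left
              (mul_le_mul_of_nonneg_right hexp (Real.exp_pos _).le) (by positivity)
        _ = c * Real.exp (-(y₂ - z) ^ 2 / (4 * s)) := by rw [hc]; ring
    calc (heatKernel s (y₁ - z) + heatKernel s (y₂ - z)) * Real.exp |z|
        = heatKernel s (y₁ - z) * Real.exp |z| + heatKernel s (y₂ - z) * Real.exp |z| := by ring
      _ ≤ c * Real.exp (-(y₁ - z) ^ 2 / (4 * s)) + c * Real.exp (-(y₂ - z) ^ 2 / (4 * s)) :=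
          add_le_add b1 b2
      _ = c * (Real.exp (-(y₁ - z) ^ 2 / (4 * s)) + Real.exp (-(y₂ - z) ^ 2 / (4 * s))) := by ring
  have hint : (∫ z : ℝ, (heatKernel s (y₁ - z) - heatKernel s (y₂ - z)) ^ 2 * Real.exp |z|) ≤
      ∫ z : ℝ, g z := by
    apply integral_mono_of_nonneg
    · exact Filter.Eventually.of_forall fun z => by positivity
    · exact hgint
    · exact Filter.Eventually.of_forall hmono
  refine le_trans hint (le_of_eq ?_)
  rw [hg]
  rw [integral_const_mul, integral_const_mul,
    integral_add (integrable_gauss_shift hs y₁) (integrable_gauss_shift hs y₂),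
    integral_gauss_shift hs y₁, integral_gauss_shift hs y₂]
  rw [hA, hc]
  have hne : Real.sqrt (2 * Real.pi * s) ≠ 0 := hsp.ne'
  field_simp
  ring

lemma sqrtinv_rpow {s : ℝ} (α : ℝ) (hs : 0 < s) :
    ((Real.sqrt s)⁻¹) ^ ((1:ℝ) + α) = s ^ (-((1 + α) / 2)) := by
  rw [Real.sqrt_eq_rpow, ← Real.rpow_neg hs.le, ← Real.rpow_mul hs.le]
  congr 1
  ring

/-- For every `α ∈ (0,1)` and `T > 0` there is a constant `K = K(α,T)` such that for all
`0 < t ≤ T` and all `y₁, y₂ ∈ ℝ`,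
`∫_0^t ∫ (p_s(y₁−z) − p_s(y₂−z))² e^{|z|} dz ds ≤ K e^{max(|y₁|,|y₂|)} |y₁−y₂|^α`. -/
theorem heatKernel_difference_integral_bound (α T : ℝ) (hα : α ∈ Set.Ioo (0 : ℝ) 1)
    (hT : 0 < T) :
    ∃ K : ℝ, 0 < K ∧ ∀ t : ℝ, 0 < t → t ≤ T → ∀ y₁ y₂ : ℝ,
      (∫ s in (0 : ℝ)..t,
          ∫ z : ℝ, (heatKernel s (y₁ - z) - heatKernel s (y₂ - z)) ^ 2 * Real.exp |z|) ≤
        K * Real.exp (max |y₁| |y₂|) * |y₁ - y₂| ^ α := by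
  obtain ⟨hα0, hα1⟩ := hα
  have h1α : (0:ℝ) < 1 - α := by linarith
  refine ⟨4 * Real.sqrt 2 * Real.exp T * (2 / (1 - α)) * T ^ ((1 - α) / 2), ?_, ?_⟩
  · have hTp : (0:ℝ) < T ^ ((1 - α) / 2) := Real.rpow_pos_of_pos hT _
    have hs2 : (0:ℝ) < Real.sqrt 2 := Real.sqrt_pos.2 (by norm_num)
    have : (0:ℝ) < 2 / (1 - α) := by positivity
    positivity
  intro t ht htT y₁ y₂
  set m := max |y₁| |y₂| with hm
  set δ := |y₁ - y₂| with hδ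
  set C : ℝ := 4 * Real.sqrt 2 * Real.exp (T + m) * δ ^ α with hC
  have hC0 : 0 ≤ C := by
    have : (0:ℝ) ≤ δ ^ α := Real.rpow_nonneg (abs_nonneg _) _
    positivity
  set r : ℝ := -((1 + α) / 2) with hr
  have hrgt : (-1:ℝ) < r := by rw [hr]; linarith
  have hG : IntervalIntegrable (fun s : ℝ => C * s ^ r) volume 0 t :=
    (intervalIntegral.intervalIntegrable_rpow' hrgt).const_mul C
  have step1 : (∫ s in (0 : ℝ)..t,
      ∫ z : ℝ, (heatKernel s (y₁ - z) - heatKernel s (y₂ - z)) ^ 2 * Real.exp |z|) ≤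
      ∫ s in (0 : ℝ)..t, C * s ^ r := by
    rw [intervalIntegral.integral_of_le ht.le, intervalIntegral.integral_of_le ht.le]
    apply integral_mono_of_nonneg
    · exact Filter.Eventually.of_forall fun s => integral_nonneg fun z => by positivity
    · exact hG.1
    · refine (ae_restrict_iff' measurableSet_Ioc).mpr
        (Filter.Eventually.of_forall fun s hsmem => ?_)
      obtain ⟨hs0, hst⟩ := hsmem
      have hsT : s ≤ T := le_trans hst htT
      refine le_trans (inner_bound hα0 hα1 hs0 hsT y₁ y₂) (le_of_eq ?_)
      rw [sqrtinv_rpow α hs0, hC, hr, hδ, hm]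
  refine le_trans step1 ?_
  rw [intervalIntegral.integral_const_mul, integral_rpow (Or.inl hrgt)]
  rw [Real.zero_rpow (by rw [hr]; intro h; nlinarith), sub_zero]
  have hre : r + 1 = (1 - α) / 2 := by rw [hr]; ring
  have hresign : (0:ℝ) < r + 1 := by rw [hre]; linarith
  have hTe : t ^ (r + 1) ≤ T ^ (r + 1) := Real.rpow_le_rpow ht.le htT hresign.le
  calc C * (t ^ (r + 1) / (r + 1)) ≤ C * (T ^ (r + 1) / (r + 1)) := by gcongr
    _ = 4 * Real.sqrt 2 * Real.exp T * (2 / (1 - α)) * T ^ ((1 - α) / 2) *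
        Real.exp m * δ ^ α := by
        rw [hC, Real.exp_add, hre]
        field_simp
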